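/- arXiv:1209.1496 — 2 statements merged into one kernel-verified Lean document; each statement's English description precedes it below -/
import Mathlib

section
/- Let a and b be integers with 1 ≤ a < b. If M is a finite matroid with no minor isomorphic to U_{a+1,b} and r(M) > a, then τ_a(M) ≤ C(b-1, a)^{r(M) - a}, where C(b-1, a) is the binomial coefficient. -/
open Set
open scoped Classical

namespace Matroid

variable {α β : Type*}

/-- The rank of a set `X` in a matroid `M`: the maximum size of an independent subset of `X`
(appropriate for finite matroids). -/
noncomputable def rk (M : Matroid α) (X : Set α) : ℕ :=
  sSup {n | ∃ I, I ⊆ X ∧ M.Indep I ∧ I.ncard = n}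

/-- The rank `r(M)` of a matroid `M`. -/
noncomputable def rank (M : Matroid α) : ℕ := M.rk M.E

/-- The deletion `M \ D` of a set `D` from `M`. -/
def delete' (M : Matroid α) (D : Set α) : Matroid α := M ↾ (M.E \ D)

/-- The contraction `M / C` of a set `C` in `M`, defined via duality. -/
def contract' (M : Matroid α) (C : Set α) : Matroid α := (M✶.delete' C)✶

/-- `N` is a minor of `M`, i.e. `N = M / C \ D` for some sets `C` and `D`. -/
def IsMinor' (N M : Matroid α) : Prop := ∃ C D : Set α, (M.contract' C).delete' D = N

/-- An isomorphism between matroids, possibly on different ground types. -/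
def IsIso (M : Matroid α) (N : Matroid β) : Prop :=
  ∃ e : M.E ≃ N.E, ∀ I : Set M.E, M.Indep ((↑) '' I) ↔ N.Indep ((↑) '' (e '' I))

/-- `N` is isomorphic to the uniform matroid `U_{k,n}`: the ground set has `n` elements and
the independent sets are exactly the subsets with at most `k` elements. -/
def IsUnif (N : Matroid α) (k n : ℕ) : Prop :=
  N.E.Finite ∧ N.E.ncard = n ∧ ∀ I ⊆ N.E, (N.Indep I ↔ I.ncard ≤ k)

/-- `M` has a minor isomorphic to `U_{k,n}`. -/
def HasUnifMinor (M : Matroid α) (k n : ℕ) : Prop :=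
  ∃ N : Matroid α, N.IsMinor' M ∧ N.IsUnif k n

/-- `τ_a(M)`: the minimum size of a collection of subsets of `E(M)`, each of rank at most `a`,
whose union is `E(M)`. -/
noncomputable def tau (M : Matroid α) (a : ℕ) : ℕ :=
  sInf {n | ∃ 𝒞 : Finset (Set α),
    𝒞.card = n ∧ (∀ X ∈ 𝒞, X ⊆ M.E ∧ M.rk X ≤ a) ∧ M.E ⊆ ⋃₀ ↑𝒞}

/-- `M` is `d`-thick: every collection of sets, each of rank less than `r(M)`, whose union
is `E(M)`, has at least `d` members. -/
def Thick (M : Matroid α) (d : ℕ) : Prop :=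
  ∀ 𝒞 : Finset (Set α), (∀ X ∈ 𝒞, X ⊆ M.E ∧ M.rk X < M.rank) → M.E ⊆ ⋃₀ ↑𝒞 → d ≤ 𝒞.card

/-- A set `X` is `d`-thick in `M` if the restriction `M|X` is `d`-thick. -/
def ThickIn (M : Matroid α) (d : ℕ) (X : Set α) : Prop := (M ↾ X).Thick d

/-- A collection of sets is simple in `M` if its members are pairwise dissimilar,
i.e. distinct members have distinct closures. -/
def SimpleColl (M : Matroid α) (𝒳 : Finset (Set α)) : Prop :=
  ∀ X ∈ 𝒳, ∀ Y ∈ 𝒳, M.closure X = M.closure Y → X = Y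

/-- `ε_M(𝒳)`: the maximum size of a subcollection of `𝒳` that is simple in `M`. -/
noncomputable def eps (M : Matroid α) (𝒳 : Finset (Set α)) : ℕ :=
  sSup {n | ∃ 𝒴 : Finset (Set α), 𝒴 ⊆ 𝒳 ∧ M.SimpleColl 𝒴 ∧ 𝒴.card = n}

/-- `𝒳` is `d`-firm in `M`: every subcollection `𝒳'` with `|𝒳'| > |𝒳|/d` has the same rank
as `𝒳`. -/
def Firm (M : Matroid α) (d : ℕ) (𝒳 : Finset (Set α)) : Prop :=
  ∀ 𝒳' ⊆ 𝒳, 𝒳.card < d * 𝒳'.card → M.rk (⋃₀ ↑𝒳') = M.rk (⋃₀ ↑𝒳)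

/-- `ℱ` is a cover of the collection `𝒳` in `M`: every member of `𝒳` is contained in a member
of `ℱ`. -/
def CoverOf (M : Matroid α) (ℱ 𝒳 : Finset (Set α)) : Prop :=
  (∀ F ∈ ℱ, F ⊆ M.E) ∧ ∀ X ∈ 𝒳, ∃ F ∈ ℱ, X ⊆ F

/-- `ℱ` is a cover of the matroid `M`: every element of `E(M)` lies in a member of `ℱ`. -/
def CoverOfGround (M : Matroid α) (ℱ : Finset (Set α)) : Prop :=
  (∀ F ∈ ℱ, F ⊆ M.E) ∧ M.E ⊆ ⋃₀ ↑ℱ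

/-- The weight `wt^d_M(ℱ) = Σ_{F ∈ ℱ} d^{r_M(F)}`. -/
noncomputable def wt (M : Matroid α) (d : ℕ) (ℱ : Finset (Set α)) : ℕ :=
  ∑ F ∈ ℱ, d ^ M.rk F

/-- `ℱ` is a `d`-minimal cover of the collection `𝒳` in `M`. -/
def MinimalCoverOf (M : Matroid α) (d : ℕ) (ℱ 𝒳 : Finset (Set α)) : Prop :=
  M.CoverOf ℱ 𝒳 ∧ ∀ ℱ' : Finset (Set α), M.CoverOf ℱ' 𝒳 → M.wt d ℱ ≤ M.wt d ℱ'

/-- `ℱ` is a `d`-minimal cover of the matroid `M`. -/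
def MinimalCoverOfGround (M : Matroid α) (d : ℕ) (ℱ : Finset (Set α)) : Prop :=
  M.CoverOfGround ℱ ∧ ∀ ℱ' : Finset (Set α), M.CoverOfGround ℱ' → M.wt d ℱ ≤ M.wt d ℱ'

/-- `τ^d(M)`: the minimum weight of a cover of `M`. -/
noncomputable def tauW (M : Matroid α) (d : ℕ) : ℕ :=
  sInf {n | ∃ ℱ : Finset (Set α), M.CoverOfGround ℱ ∧ M.wt d ℱ = n}

/-- `𝒳` is `d`-scattered in `M`: every member of `𝒳` is `d`-thick in `M`, and
`{cl_M(X) : X ∈ 𝒳}` is a `d`-minimal cover of `𝒳` in `M`. -/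
def Scattered (M : Matroid α) (d : ℕ) (𝒳 : Finset (Set α)) : Prop :=
  (∀ X ∈ 𝒳, M.ThickIn d X) ∧ M.MinimalCoverOf d (𝒳.image M.closure) 𝒳

/-- `(M, 𝒮; L)` is an `(a, q, h, d)`-pyramid, where `h = L.length` and `L` lists the
elements `e_1, …, e_h`. -/
def IsPyramid (M : Matroid α) (𝒮 : Finset (Set α)) (L : List α) (a q d : ℕ) : Prop :=
  L.Nodup ∧ M.Indep {x | x ∈ L} ∧
  𝒮.Nonempty ∧
  (∀ S ∈ 𝒮, S ⊆ M.E ∧ M.rk S = a) ∧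
  (∀ S ∈ 𝒮, M.rk (S ∪ {x | x ∈ L}) = M.rk S + M.rk {x | x ∈ L}) ∧
  (∀ i < L.length, ∀ S ∈ 𝒮, ∃ f : Fin q → Set α,
    (∀ j, f j ∈ 𝒮) ∧
    (∀ j k, j ≠ k →
      (M.contract' {x | x ∈ L.take i}).closure (f j) ≠
        (M.contract' {x | x ∈ L.take i}).closure (f k)) ∧
    (∀ j, (M.contract' {x | x ∈ L.take (i+1)}).closure (f j) =
      (M.contract' {x | x ∈ L.take (i+1)}).closure S)) ∧
  (∀ S ∈ 𝒮, M.ThickIn d S)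

/-- `M` is representable over the field `F`. -/
def RepresentableOver (M : Matroid α) (F : Type*) [Field F] : Prop :=
  ∃ (n : ℕ) (φ : α → (Fin n → F)),
    ∀ I ⊆ M.E, (M.Indep I ↔ LinearIndependent F (fun x : I => φ x))

end Matroid

namespace Matroid

section Aux

variable {α : Type*} {M : Matroid α} {X Y I : Set α}

private lemma delete_eq (M : Matroid α) (D : Set α) : M.delete' D = M ↾ (M.E \ D) := rfl

private lemma contract_eq (M : Matroid α) (C : Set α) : M.contract' C = (M✶.delete' C)✶ := rfl

private lemma contract'_ground (M : Matroid α) (C : Set α) : (M.contract' C).E = M.E \ C := rfl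

private lemma rk_le_of_forall {n : ℕ}
    (h : ∀ I, I ⊆ X → M.Indep I → I.ncard ≤ n) : M.rk X ≤ n := by
  refine csSup_le ⟨0, ∅, empty_subset _, M.empty_indep, Set.ncard_empty α⟩ ?_
  rintro m ⟨I, hIX, hI, rfl⟩
  exact h I hIX hI

private lemma le_rk (hM : M.Finite) (hIX : I ⊆ X) (hI : M.Indep I) :
    I.ncard ≤ M.rk X := by
  refine le_csSup ⟨M.E.ncard, ?_⟩ ⟨I, hIX, hI, rfl⟩
  rintro m ⟨J, hJX, hJ, rfl⟩
  exact Set.ncard_le_ncard hJ.subset_ground hM.ground_finite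

private lemma exists_rk_witness (hM : M.Finite) (X : Set α) :
    ∃ I, I ⊆ X ∧ M.Indep I ∧ I.ncard = M.rk X := by
  have h : M.rk X ∈ {n | ∃ I, I ⊆ X ∧ M.Indep I ∧ I.ncard = n} := by
    refine Nat.sSup_mem ⟨0, ∅, empty_subset _, M.empty_indep, Set.ncard_empty α⟩
      ⟨M.E.ncard, ?_⟩
    rintro m ⟨J, hJX, hJ, rfl⟩
    exact Set.ncard_le_ncard hJ.subset_ground hM.ground_finite
  exact h

private lemma rk_closure_le {T : Set α} (hM : M.Finite) (hT : M.Indep T) :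
    M.rk (M.closure T) ≤ T.ncard := by
  refine rk_le_of_forall fun I hIcl hI => ?_
  by_contra hlt
  push_neg at hlt
  have hIfin : I.Finite := hM.ground_finite.subset hI.subset_ground
  have hTfin : T.Finite := hM.ground_finite.subset hT.subset_ground
  have hlt' : T.encard < I.encard := by
    rw [← hTfin.cast_ncard_eq, ← hIfin.cast_ncard_eq]
    exact_mod_cast hlt
  obtain ⟨x, hx, hxi⟩ := hT.augment hI hlt'
  rw [hT.insert_indep_iff_of_notMem hx.2] at hxi
  exact hxi.2 (hIcl hx.1)

private lemma delete'_delete' (M : Matroid α) (D₁ D₂ : Set α) :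
    (M.delete' D₁).delete' D₂ = M.delete' (D₁ ∪ D₂) := by
  simp only [delete_eq, restrict_ground_eq]
  rw [restrict_restrict_eq _ diff_subset, diff_diff]

private lemma contract'_empty (M : Matroid α) : M.contract' ∅ = M := by
  rw [contract_eq, delete_eq, diff_empty, restrict_ground_eq_self, dual_dual]

private lemma contract'_contract' (M : Matroid α) (C₁ C₂ : Set α) :
    (M.contract' C₁).contract' C₂ = M.contract' (C₁ ∪ C₂) := by
  simp only [contract_eq, dual_dual]
  rw [delete'_delete']

private lemma hasUnifMinor_of_contract {C : Set α} {k n : ℕ}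
    (h : (M.contract' C).HasUnifMinor k n) : M.HasUnifMinor k n := by
  obtain ⟨N, ⟨C', D, rfl⟩, hN⟩ := h
  exact ⟨_, ⟨C ∪ C', D, by rw [← contract'_contract']⟩, hN⟩

private lemma restrict_isMinor (M : Matroid α) {S : Set α} (hS : S ⊆ M.E) :
    (M ↾ S).IsMinor' M := by
  refine ⟨∅, M.E \ S, ?_⟩
  rw [contract'_empty, delete_eq, Set.diff_diff_cancel_left hS]

private lemma contract_elem_indep_iff {e : α} (he : M.Indep {e}) :
    (M.contract' {e}).Indep I ↔ e ∉ I ∧ M.Indep (insert e I) := by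
  have heE : e ∈ M.E := he.subset_ground rfl
  obtain ⟨B₀, hB₀, heB₀⟩ := he.exists_isBase_superset
  have heB₀' : e ∈ B₀ := heB₀ rfl
  rw [contract_eq, dual_indep_iff_exists', delete_eq]
  constructor
  · rintro ⟨hIE, B, hB, hdj⟩
    rw [restrict_ground_eq] at hIE
    have hBbasis : M✶.IsBasis B (M✶.E \ {e}) :=
      (isBasis'_iff_isBasis diff_subset).1 (isBase_restrict_iff'.1 hB)
    have hBbase : M✶.IsBase B := by
      by_contra hnb
      have hD := hB₀.compl_isBase_dual
      obtain ⟨x, hx, hxi⟩ := hBbasis.indep.exists_insert_of_not_isBase hnb hD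
      have hxE : x ∈ M✶.E \ {e} := ⟨hx.1.1, fun h => hx.1.2 (by rw [h.out]; exact heB₀')⟩
      exact hx.2 (hBbasis.mem_of_insert_indep hxE hxi)
    have hMbase : M.IsBase (M.E \ B) := hBbase.compl_isBase_of_dual
    refine ⟨fun h => (hIE h).2 rfl, hMbase.indep.subset ?_⟩
    refine insert_subset ⟨heE, fun h => (hBbasis.subset h).2 rfl⟩ ?_
    exact fun x hx => ⟨(hIE hx).1, fun hxB => (Set.disjoint_left.1 hdj hx) hxB⟩
  · rintro ⟨heI, hins⟩
    obtain ⟨B₁, hB₁, hsub⟩ := hins.exists_isBase_superset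
    have heB₁ : e ∈ B₁ := hsub (mem_insert e I)
    have hcompl : M✶.IsBase (M.E \ B₁) := hB₁.compl_isBase_dual
    refine ⟨?_, M.E \ B₁, ?_, ?_⟩
    · rw [restrict_ground_eq]
      exact fun x hx => ⟨hins.subset_ground (mem_insert_of_mem _ hx),
        fun h => heI (by rwa [← h.out])⟩
    · rw [isBase_restrict_iff', isBasis'_iff_isBasis diff_subset]
      refine hcompl.indep.isBasis_of_maximal_subset ?_ ?_ diff_subset
      · exact fun x hx => ⟨hx.1, fun h => hx.2 (by rw [h.out]; exact heB₁)⟩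
      · intro J hJ hBJ _
        rw [← hcompl.eq_of_subset_indep hJ hBJ]
    · exact Set.disjoint_left.2 fun x hxI hxc => hxc.2 (hsub (mem_insert_of_mem _ hxI))

private lemma contract'_finite {e : α} (hM : M.Finite) : (M.contract' {e}).Finite :=
  ⟨by rw [contract'_ground]; exact hM.ground_finite.diff⟩

private lemma rk_union_contract_le {e : α} (hM : M.Finite) (he : M.Indep {e})
    (hY : Y ⊆ M.E \ {e}) :
    M.rk (Y ∪ {e}) ≤ (M.contract' {e}).rk Y + 1 := by
  have hMfin' : (M.contract' {e}).Finite := contract'_finite hM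
  refine rk_le_of_forall fun I hIY hI => ?_
  have hIfin : I.Finite := hM.ground_finite.subset hI.subset_ground
  by_cases heI : e ∈ I
  · have h1 : (M.contract' {e}).Indep (I \ {e}) := by
      rw [contract_elem_indep_iff he]
      exact ⟨by simp, by rwa [insert_diff_singleton, insert_eq_self.2 heI]⟩
    have h2 : I \ {e} ⊆ Y := fun x hx => ((hIY hx.1).elim id (fun h => absurd h hx.2))
    have h3 := le_rk hMfin' h2 h1
    have h4 : (I \ {e}).ncard = I.ncard - 1 := Set.ncard_diff_singleton_of_mem heI
    have h5 : 0 < I.ncard := (Set.ncard_pos hIfin).2 ⟨e, heI⟩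
    omega
  · have hIY' : I ⊆ Y := fun x hx => ((hIY hx).elim id (fun h => absurd (h.out ▸ hx) heI))
    obtain ⟨J, hJ⟩ := (M.contract' {e}).exists_isBasis I
      (by rw [contract'_ground]; exact hIY'.trans hY)
    have hJI := hJ.subset
    have hJcard := le_rk hMfin' (hJI.trans hIY') hJ.indep
    have hJfin : J.Finite := hIfin.subset hJI
    obtain ⟨heJ, hJe⟩ := (contract_elem_indep_iff he).1 hJ.indep
    by_contra hcon
    push_neg at hcon
    have hlt : (insert e J).encard < I.encard := by
      rw [← hIfin.cast_ncard_eq, ← (hJfin.insert e).cast_ncard_eq,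
        Set.ncard_insert_of_notMem heJ hJfin]
      exact_mod_cast (by omega : J.ncard + 1 < I.ncard)
    obtain ⟨x, hx, hxi⟩ := hJe.augment hI hlt
    have hxe : x ≠ e := fun h => hx.2 (h ▸ mem_insert e J)
    have hxJ : x ∉ J := fun h => hx.2 (mem_insert_of_mem _ h)
    have hxJi : (M.contract' {e}).Indep (insert x J) := by
      rw [contract_elem_indep_iff he]
      refine ⟨by simp [Ne.symm hxe, heJ], ?_⟩
      rwa [Set.insert_comm]
    exact hxJ (hJ.mem_of_insert_indep hx.1 hxJi)

private lemma rank_contract_lt {e : α} (hM : M.Finite) (he : M.Indep {e}) :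
    (M.contract' {e}).rank + 1 ≤ M.rank := by
  have hMfin' : (M.contract' {e}).Finite := contract'_finite hM
  obtain ⟨I, hIE, hIi, hIcard⟩ := exists_rk_witness hMfin' (M.contract' {e}).E
  obtain ⟨heI, hins⟩ := (contract_elem_indep_iff he).1 hIi
  have hIfin : I.Finite := hMfin'.ground_finite.subset hIE
  have h1 : (insert e I).ncard ≤ M.rk M.E := le_rk hM hins.subset_ground hins
  rw [Set.ncard_insert_of_notMem heI hIfin] at h1
  show (M.contract' {e}).rk (M.contract' {e}).E + 1 ≤ M.rk M.E
  omega

private lemma cover_lemma {a b : ℕ} (ha : 1 ≤ a) (hab : a < b) (M : Matroid α)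
    (hM : M.Finite) (hU : ¬ M.HasUnifMinor (a + 1) b) {X : Set α} (hXE : X ⊆ M.E)
    (hrk : M.rk X ≤ a + 1) :
    ∃ 𝒞 : Finset (Set α), 𝒞.card ≤ (b - 1).choose a ∧
      (∀ W ∈ 𝒞, W ⊆ M.E ∧ M.rk W ≤ a) ∧ X ⊆ ⋃₀ ↑𝒞 := by
  have hchoosepos : 0 < (b - 1).choose a := Nat.choose_pos (by omega)
  by_cases hXa : M.rk X ≤ a
  · refine ⟨{X}, by simp only [Finset.card_singleton]; exact hchoosepos, ?_, ?_⟩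
    · intro W hW
      rw [Finset.mem_singleton] at hW
      subst hW; exact ⟨hXE, hXa⟩
    · simp
  push_neg at hXa
  have hXfin : X.Finite := hM.ground_finite.subset hXE
  obtain ⟨I₁, hI₁X, hI₁i, hI₁card⟩ := exists_rk_witness hM X
  obtain ⟨I₀, hI₀sub, hI₀card⟩ := Set.exists_subset_card_eq (n := a) (s := I₁) (by omega)
  have hI₀X : I₀ ⊆ X := hI₀sub.trans hI₁X
  set U : Set (Set α) := {S | I₀ ⊆ S ∧ S ⊆ X ∧ ∀ D ⊆ S, D.ncard ≤ a + 1 → M.Indep D}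
    with hU_def
  have hUfin : U.Finite := hXfin.finite_subsets.subset (fun S hS => hS.2.1)
  have hI₀U : I₀ ∈ U :=
    ⟨Subset.rfl, hI₀X, fun D hD _ => (hI₁i.subset (hD.trans hI₀sub))⟩
  obtain ⟨S, hSU, hSmax⟩ := Set.Finite.exists_maximalFor Set.ncard U hUfin ⟨I₀, hI₀U⟩
  obtain ⟨hI₀S, hSX, hSunif⟩ := hSU
  have hSfin : S.Finite := hXfin.subset hSX
  have haS : a ≤ S.ncard := by
    rw [← hI₀card]; exact Set.ncard_le_ncard hI₀S hSfin
  have hSE : S ⊆ M.E := hSX.trans hXE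
  have hScard : S.ncard ≤ b - 1 := by
    by_contra hbig
    push_neg at hbig
    obtain ⟨S', hS'S, hS'card⟩ := Set.exists_subset_card_eq (show b ≤ S.ncard by omega)
    apply hU
    refine ⟨M ↾ S', restrict_isMinor M (hS'S.trans hSE), ?_, ?_, ?_⟩
    · show (S' : Set α).Finite
      exact hSfin.subset hS'S
    · show (S' : Set α).ncard = b
      exact hS'card
    · intro J hJ
      rw [restrict_ground_eq] at hJ
      rw [restrict_indep_iff]
      constructor
      · rintro ⟨hJi, hJS'⟩
        have := le_rk hM ((hJS'.trans hS'S).trans hSX) hJi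
        omega
      · intro hJcard
        exact ⟨hSunif J (hJ.trans hS'S) hJcard, hJ⟩
  have hcov : ∀ x ∈ X, ∃ T, T ⊆ S ∧ T.ncard = a ∧ x ∈ M.closure T := by
    intro x hx
    by_cases hxS : x ∈ S
    · obtain ⟨T, hxT, hTS, hTcard⟩ :=
        Set.exists_subsuperset_card_eq (s := {x}) (t := S)
          (Set.singleton_subset_iff.2 hxS) (by simpa using ha) haS
      exact ⟨T, hTS, hTcard,
        (M.subset_closure T (hTS.trans hSE)) (hxT rfl)⟩
    · have hnm : insert x S ∉ U := by
        intro hmem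
        have h1 := hSmax hmem (Set.ncard_le_ncard (subset_insert x S) (hSfin.insert x))
        have h2 := Set.ncard_insert_of_notMem hxS hSfin
        omega
      rw [hU_def, mem_setOf_eq] at hnm
      push_neg at hnm
      obtain ⟨D, hDsub, hDcard, hDdep⟩ :=
        hnm (hI₀S.trans (subset_insert x S)) (insert_subset hx hSX)
      have hxD : x ∈ D := by
        by_contra hxD
        refine hDdep (hSunif D (fun y hy => ?_) hDcard)
        rcases hDsub hy with h | h
        · exact absurd (h ▸ hy) hxD
        · exact h
      have hDfin : D.Finite := (hSfin.insert x).subset hDsub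
      set D' := D \ {x} with hD'def
      have hD'S : D' ⊆ S := fun y hy =>
        ((hDsub hy.1).elim (fun h => absurd h hy.2) id)
      have hD'fin : D'.Finite := hDfin.diff
      have hD'card : D'.ncard ≤ a := by
        rw [hD'def, Set.ncard_diff_singleton_of_mem hxD]
        omega
      have hD'i : M.Indep D' := hSunif D' hD'S (by omega)
      have hxcl : x ∈ M.closure D' := by
        by_contra hnot
        have hins : insert x D' = D := by
          rw [hD'def, insert_diff_singleton, insert_eq_self.2 hxD]
        refine hDdep ?_
        rw [← hins]
        exact (hD'i.insert_indep_iff_of_notMem (by simp [hD'def])).2 ⟨hXE hx, hnot⟩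
      obtain ⟨T, hD'T, hTS, hTcard⟩ := Set.exists_subsuperset_card_eq hD'S hD'card haS
      exact ⟨T, hTS, hTcard, M.closure_subset_closure hD'T hxcl⟩
  set S' : Finset α := hSfin.toFinset with hS'def
  refine ⟨(S'.powersetCard a).image (fun T : Finset α => M.closure (T : Set α)), ?_, ?_, ?_⟩
  · calc ((S'.powersetCard a).image (fun T : Finset α => M.closure (T : Set α))).card
        ≤ (S'.powersetCard a).card := Finset.card_image_le
      _ = S'.card.choose a := by rw [Finset.card_powersetCard]
      _ ≤ (b - 1).choose a := by
          refine Nat.choose_le_choose a ?_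
          rw [hS'def, ← Set.ncard_eq_toFinset_card _ hSfin]
          exact hScard
  · intro W hW
    simp only [Finset.mem_image, Finset.mem_powersetCard] at hW
    obtain ⟨T, ⟨hTS', hTcard⟩, rfl⟩ := hW
    have hT : (↑T : Set α) ⊆ S := by
      intro y hy
      have := hTS' hy
      rwa [hS'def, Set.Finite.mem_toFinset] at this
    have hTi : M.Indep ↑T := hSunif _ hT (by rw [Set.ncard_coe_finset]; omega)
    refine ⟨M.closure_subset_ground _, ?_⟩
    have := rk_closure_le hM hTi
    rw [Set.ncard_coe_finset] at this
    omega
  · intro x hx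
    obtain ⟨T, hTS, hTcard, hxcl⟩ := hcov x hx
    have hTfin : T.Finite := hSfin.subset hTS
    refine ⟨M.closure ↑hTfin.toFinset, ?_, by rwa [hTfin.coe_toFinset]⟩
    rw [Finset.mem_coe, Finset.mem_image]
    refine ⟨hTfin.toFinset, Finset.mem_powersetCard.2 ⟨?_, ?_⟩, rfl⟩
    · intro y hy
      rw [Set.Finite.mem_toFinset] at hy
      rw [hS'def, Set.Finite.mem_toFinset]
      exact hTS hy
    · rw [← Set.ncard_eq_toFinset_card _ hTfin]
      exact hTcard

private lemma main_ind {a b : ℕ} (ha : 1 ≤ a) (hab : a < b) :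
    ∀ (r : ℕ) (M : Matroid α), M.Finite → ¬ M.HasUnifMinor (a + 1) b → M.rank ≤ a + r →
      ∃ 𝒞 : Finset (Set α), 𝒞.card ≤ ((b - 1).choose a) ^ r ∧
        (∀ W ∈ 𝒞, W ⊆ M.E ∧ M.rk W ≤ a) ∧ M.E ⊆ ⋃₀ ↑𝒞 := by
  have hchoosepos : 0 < (b - 1).choose a := Nat.choose_pos (by omega)
  intro r
  induction r with
  | zero =>
    intro M hM hU hrank
    refine ⟨{M.E}, by simp, ?_, by simp⟩
    intro W hW
    rw [Finset.mem_singleton] at hW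
    subst hW
    exact ⟨Subset.rfl, (by simpa using hrank : M.rank ≤ a)⟩
  | succ r IH =>
    intro M hM hU hrank
    by_cases hle : M.rank ≤ a + r
    · obtain ⟨𝒞, h1, h2, h3⟩ := IH M hM hU hle
      exact ⟨𝒞, h1.trans (Nat.pow_le_pow_right hchoosepos (Nat.le_succ r)), h2, h3⟩
    push_neg at hle
    obtain ⟨I, hIE, hIi, hIcard⟩ := exists_rk_witness hM M.E
    have hIcard' : I.ncard = M.rank := hIcard
    have hIfin : I.Finite := hM.ground_finite.subset hIE
    have hIne : I.Nonempty := by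
      rw [← Set.ncard_pos hIfin]
      omega
    obtain ⟨e, heI⟩ := hIne
    have he : M.Indep {e} := hIi.subset (Set.singleton_subset_iff.2 heI)
    have hM'fin : (M.contract' {e}).Finite := contract'_finite hM
    have hM'U : ¬ (M.contract' {e}).HasUnifMinor (a + 1) b :=
      fun h => hU (hasUnifMinor_of_contract h)
    have hM'rank : (M.contract' {e}).rank ≤ a + r := by
      have := rank_contract_lt hM he
      omega
    obtain ⟨𝒞', h1', h2', h3'⟩ := IH (M.contract' {e}) hM'fin hM'U hM'rank
    have hstep : ∀ Y ∈ 𝒞', ∃ 𝒟 : Finset (Set α), 𝒟.card ≤ (b - 1).choose a ∧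
        (∀ W ∈ 𝒟, W ⊆ M.E ∧ M.rk W ≤ a) ∧ Y ∪ {e} ⊆ ⋃₀ ↑𝒟 := by
      intro Y hY
      obtain ⟨hYE, hYrk⟩ := h2' Y hY
      rw [contract'_ground] at hYE
      refine cover_lemma ha hab M hM hU ?_ ?_
      · exact union_subset (hYE.trans diff_subset)
          (Set.singleton_subset_iff.2 (he.subset_ground rfl))
      · exact (rk_union_contract_le hM he hYE).trans (by omega)
    choose! f hf1 hf2 hf3 using hstep
    refine ⟨𝒞'.biUnion f, ?_, ?_, ?_⟩
    · calc (𝒞'.biUnion f).card ≤ ∑ Y ∈ 𝒞', (f Y).card := Finset.card_biUnion_le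
        _ ≤ ∑ _Y ∈ 𝒞', (b - 1).choose a := Finset.sum_le_sum (fun Y hY => hf1 Y hY)
        _ = 𝒞'.card * (b - 1).choose a := by rw [Finset.sum_const, smul_eq_mul]
        _ ≤ (b - 1).choose a ^ r * (b - 1).choose a :=
            Nat.mul_le_mul_right _ h1'
        _ = (b - 1).choose a ^ (r + 1) := (pow_succ _ r).symm
    · intro W hW
      obtain ⟨Y, hY, hWf⟩ := Finset.mem_biUnion.1 hW
      exact hf2 Y hY W hWf
    · have h𝒞'ne : ∃ Y, Y ∈ 𝒞' := by
        obtain ⟨x₀, hx₀I, hx₀e⟩ := Set.exists_ne_of_one_lt_ncard (s := I) (by omega) e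
        have hx₀ : x₀ ∈ (M.contract' {e}).E := by
          rw [contract'_ground]
          exact ⟨hIE hx₀I, hx₀e⟩
        obtain ⟨Y, hY, -⟩ := mem_sUnion.1 (h3' hx₀)
        exact ⟨Y, hY⟩
      intro x hx
      by_cases hxe : x = e
      · obtain ⟨Y, hY⟩ := h𝒞'ne
        obtain ⟨W, hW, hxW⟩ := hf3 Y hY (show x ∈ Y ∪ {e} by simp [hxe])
        exact mem_sUnion.2 ⟨W, Finset.mem_coe.2 (Finset.mem_biUnion.2 ⟨Y, hY, Finset.mem_coe.1 hW⟩), hxW⟩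
      · have hx' : x ∈ (M.contract' {e}).E := by
          rw [contract'_ground]
          exact ⟨hx, hxe⟩
        obtain ⟨Y, hY, hxY⟩ := mem_sUnion.1 (h3' hx')
        have hY' : Y ∈ 𝒞' := hY
        obtain ⟨W, hW, hxW⟩ := hf3 Y hY' (Or.inl hxY)
        exact mem_sUnion.2 ⟨W, Finset.mem_coe.2 (Finset.mem_biUnion.2 ⟨Y, hY', Finset.mem_coe.1 hW⟩), hxW⟩

end Aux

/-- If `1 ≤ a < b` and `M` is a finite matroid with no `U_{a+1,b}`-minor and
`r(M) > a`, then `τ_a(M) ≤ C(b-1,a)^{r(M)-a}`. -/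
theorem statement1 {α : Type*} (a b : ℕ) (ha : 1 ≤ a) (hab : a < b)
    (M : Matroid α) (hM : M.Finite) (hU : ¬ M.HasUnifMinor (a + 1) b) (hr : a < M.rank) :
    M.tau a ≤ ((b - 1).choose a) ^ (M.rank - a) := by
  obtain ⟨𝒞, h1, h2, h3⟩ := main_ind ha hab (M.rank - a) M hM hU (by omega)
  have hmem : 𝒞.card ∈ {n | ∃ 𝒞' : Finset (Set α),
      𝒞'.card = n ∧ (∀ X ∈ 𝒞', X ⊆ M.E ∧ M.rk X ≤ a) ∧ M.E ⊆ ⋃₀ ↑𝒞'} :=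
    ⟨𝒞, rfl, h2, h3⟩
  exact (Nat.sInf_le hmem).trans h1

end Matroid
end

section
/- Let a ≥ 1 and d ≥ 1 be integers, M be a finite matroid with r(M) > a, and 𝒳 ⊆ ℛ_a(M). If every X ∈ 𝒳 is d-thick in M and {E(M)} is a d-minimal cover of 𝒳 in M, then ε_M(𝒳) ≥ d^{r(M) - a} and M is d-thick. -/
open Set
open scoped Classical

namespace Matroid

section Aux

variable {γ : Type*} {M : Matroid γ} {X Y I J : Set γ}

private lemma zero_mem_rkSet (M : Matroid γ) (X : Set γ) :
    0 ∈ {n | ∃ I, I ⊆ X ∧ M.Indep I ∧ I.ncard = n} :=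
  ⟨∅, empty_subset X, M.empty_indep, by simp⟩

private lemma bddAbove_rkSet (M : Matroid γ) [M.Finite] (X : Set γ) :
    BddAbove {n | ∃ I, I ⊆ X ∧ M.Indep I ∧ I.ncard = n} := by
  refine ⟨M.E.ncard, ?_⟩
  rintro n ⟨I, -, hI, rfl⟩
  exact Set.ncard_le_ncard hI.subset_ground M.ground_finite

private lemma rk_eq_ncard_of_basis [M.Finite] (hI : M.IsBasis I X) : M.rk X = I.ncard := by
  refine le_antisymm (csSup_le ⟨0, zero_mem_rkSet M X⟩ ?_)
    (le_csSup (bddAbove_rkSet M X) ⟨I, hI.subset, hI.indep, rfl⟩)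
  rintro n ⟨J, hJX, hJ, rfl⟩
  obtain ⟨J', hJ', hJJ'⟩ := hJ.subset_isBasis_of_subset hJX hI.subset_ground
  have h1 : J'.ncard = I.ncard := by
    rw [Set.ncard_def, Set.ncard_def, hJ'.encard_eq_encard hI]
  exact h1 ▸ Set.ncard_le_ncard hJJ' (M.set_finite J' hJ'.indep.subset_ground)

private lemma rk_mono (M : Matroid γ) [M.Finite] (h : Y ⊆ X) : M.rk Y ≤ M.rk X :=
  csSup_le_csSup (bddAbove_rkSet M X) ⟨0, zero_mem_rkSet M Y⟩ (by
    rintro n ⟨I, hIY, hI, rfl⟩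
    exact ⟨I, hIY.trans h, hI, rfl⟩)

private lemma rk_closure_eq [M.Finite] (hX : X ⊆ M.E) : M.rk (M.closure X) = M.rk X := by
  obtain ⟨I, hI⟩ := M.exists_isBasis X hX
  rw [rk_eq_ncard_of_basis hI.isBasis_closure_right, rk_eq_ncard_of_basis hI]

private lemma subset_closure_of_rk_le [M.Finite] (hYX : Y ⊆ X) (hX : X ⊆ M.E)
    (h : M.rk X ≤ M.rk Y) : X ⊆ M.closure Y := by
  obtain ⟨I, hI⟩ := M.exists_isBasis Y (hYX.trans hX)
  obtain ⟨J, hJ, hIJ⟩ := hI.indep.subset_isBasis_of_subset (hI.subset.trans hYX) hX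
  have hIJ' : I = J := Set.eq_of_subset_of_ncard_le hIJ
    (by rw [← rk_eq_ncard_of_basis hI, ← rk_eq_ncard_of_basis hJ]; exact h)
    (M.set_finite J hJ.indep.subset_ground)
  calc X ⊆ M.closure X := M.subset_closure X hX
    _ = M.closure J := hJ.closure_eq_closure.symm
    _ = M.closure I := by rw [hIJ']
    _ = M.closure Y := hI.closure_eq_closure

private lemma rk_restrict (M : Matroid γ) (hYX : Y ⊆ X) : (M ↾ X).rk Y = M.rk Y := by
  unfold rk
  congr 1
  ext n
  constructor
  · rintro ⟨I, hIY, hI, rfl⟩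
    exact ⟨I, hIY, (restrict_indep_iff.1 hI).1, rfl⟩
  · rintro ⟨I, hIY, hI, rfl⟩
    exact ⟨I, hIY, restrict_indep_iff.2 ⟨hI, hIY.trans hYX⟩, rfl⟩

private lemma rank_restrict (M : Matroid γ) (X : Set γ) : (M ↾ X).rank = M.rk X := by
  rw [rank, restrict_ground_eq, rk_restrict M Subset.rfl]

private lemma sum_image_le'' {ι β : Type*} [DecidableEq β] (s : Finset ι) (f : ι → β)
    (g : β → ℕ) : ∑ y ∈ s.image f, g y ≤ ∑ x ∈ s, g (f x) := by
  induction s using Finset.induction_on with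
  | empty => simp
  | @insert a s ha ih =>
    rw [Finset.image_insert, Finset.sum_insert ha]
    by_cases h : f a ∈ s.image f
    · rw [Finset.insert_eq_self.2 h]
      exact ih.trans (Nat.le_add_left _ _)
    · rw [Finset.sum_insert h]
      exact Nat.add_le_add_left ih _

end Aux

end Matroid

namespace Matroid

/-- If `a, d ≥ 1`, `M` is a finite matroid with `r(M) > a`, `𝒳 ⊆ ℛ_a(M)`,
every member of `𝒳` is `d`-thick in `M`, and `{E(M)}` is a `d`-minimal cover of `𝒳` in `M`,
then `ε_M(𝒳) ≥ d^{r(M)-a}` and `M` is `d`-thick. -/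
theorem statement12 {α : Type*} (a d : ℕ) (ha : 1 ≤ a) (hd : 1 ≤ d)
    (M : Matroid α) (hM : M.Finite) (hr : a < M.rank) (𝒳 : Finset (Set α))
    (h𝒳 : ∀ X ∈ 𝒳, X ⊆ M.E ∧ M.rk X = a)
    (hthick : ∀ X ∈ 𝒳, M.ThickIn d X)
    (hcover : M.MinimalCoverOf d {M.E} 𝒳) :
    d ^ (M.rank - a) ≤ M.eps 𝒳 ∧ M.Thick d := by
  haveI := hM
  obtain ⟨hcov, hmin⟩ := hcover
  have hE : M.E ⊆ M.E := Subset.rfl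
  have key : ∀ ℱ' : Finset (Set α), M.CoverOf ℱ' 𝒳 → d ^ M.rank ≤ M.wt d ℱ' := by
    intro ℱ' h
    have := hmin ℱ' h
    rwa [wt, Finset.sum_singleton, ← rank] at this
  -- every X in 𝒳, X ⊆ closure X
  have hXcl : ∀ X ∈ 𝒳, X ⊆ M.closure X := fun X hX => M.subset_closure X (h𝒳 X hX).1
  constructor
  · -- eps bound
    set S := {n | ∃ 𝒴 : Finset (Set α), 𝒴 ⊆ 𝒳 ∧ M.SimpleColl 𝒴 ∧ 𝒴.card = n} with hS
    have hS0 : 0 ∈ S :=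
      ⟨∅, Finset.empty_subset _, fun X hX => absurd hX (Finset.notMem_empty X), rfl⟩
    have hSbdd : BddAbove S := ⟨𝒳.card, by rintro n ⟨𝒴, h𝒴, -, rfl⟩; exact Finset.card_le_card h𝒴⟩
    have hepsS : M.eps 𝒳 = sSup S := rfl
    have hepsmem : M.eps 𝒳 ∈ S := by rw [hepsS]; exact Nat.sSup_mem ⟨0, hS0⟩ hSbdd
    obtain ⟨𝒴, h𝒴𝒳, h𝒴simple, h𝒴card⟩ := hepsmem
    have hmax : ∀ X ∈ 𝒳, ∃ Y ∈ 𝒴, M.closure X = M.closure Y := by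
      intro X hX
      by_contra hcon
      push_neg at hcon
      have hXnot : X ∉ 𝒴 := fun h => hcon X h rfl
      have hmem : (insert X 𝒴).card ∈ S := by
        refine ⟨insert X 𝒴, Finset.insert_subset hX h𝒴𝒳, ?_, rfl⟩
        intro A hA B hB hAB
        rcases Finset.mem_insert.1 hA with hAX | hA
        · rcases Finset.mem_insert.1 hB with hBX | hB
          · rw [hAX, hBX]
          · refine absurd ?_ (hcon B hB)
            rw [← hAX]
            exact hAB
        · rcases Finset.mem_insert.1 hB with hBX | hB
          · refine absurd ?_ (hcon A hA)
            rw [← hBX]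
            exact hAB.symm
          · exact h𝒴simple A hA B hB hAB
      have := le_csSup hSbdd hmem
      rw [← hepsS, Finset.card_insert_of_notMem hXnot, h𝒴card] at this
      omega
    have hcover1 : M.CoverOf (𝒴.image M.closure) 𝒳 := by
      constructor
      · intro F hF
        obtain ⟨Y, hY, rfl⟩ := Finset.mem_image.1 hF
        exact M.closure_subset_ground Y
      · intro X hX
        obtain ⟨Y, hY, hXY⟩ := hmax X hX
        exact ⟨M.closure Y, Finset.mem_image_of_mem _ hY, hXY ▸ hXcl X hX⟩
    have hwt1 : M.wt d (𝒴.image M.closure) ≤ M.eps 𝒳 * d ^ a := by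
      calc M.wt d (𝒴.image M.closure) ≤ ∑ Y ∈ 𝒴, d ^ M.rk (M.closure Y) :=
            sum_image_le'' 𝒴 M.closure (fun F => d ^ M.rk F)
        _ = ∑ Y ∈ 𝒴, d ^ a := by
            refine Finset.sum_congr rfl fun Y hY => ?_
            rw [rk_closure_eq (h𝒳 Y (h𝒴𝒳 hY)).1, (h𝒳 Y (h𝒴𝒳 hY)).2]
        _ = M.eps 𝒳 * d ^ a := by rw [Finset.sum_const, h𝒴card, smul_eq_mul]
    have hfin : d ^ M.rank ≤ M.eps 𝒳 * d ^ a := (key _ hcover1).trans hwt1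
    have hpow : d ^ (M.rank - a) * d ^ a = d ^ M.rank := by
      rw [← pow_add]
      congr 1
      omega
    exact Nat.le_of_mul_le_mul_right (hpow ▸ hfin) (Nat.pow_pos (n := a) hd)
  · -- thickness
    intro 𝒞 h𝒞 hcovE
    by_contra hlt
    push_neg at hlt
    have hstep : ∀ X ∈ 𝒳, ∃ C ∈ 𝒞, X ⊆ M.closure C := by
      intro X hX
      by_contra hcon
      push_neg at hcon
      have hXE := (h𝒳 X hX).1
      have hth := hthick X hX
      have hd' := hth (𝒞.image (· ∩ X)) ?_ ?_
      · have : (𝒞.image (· ∩ X)).card ≤ 𝒞.card := Finset.card_image_le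
        omega
      · intro Y hY
        obtain ⟨C, hC, rfl⟩ := Finset.mem_image.1 hY
        rw [restrict_ground_eq, rk_restrict M inter_subset_right, rank_restrict]
        refine ⟨inter_subset_right, ?_⟩
        have hle : M.rk (C ∩ X) ≤ M.rk X := M.rk_mono inter_subset_right
        rcases lt_or_eq_of_le hle with h | h
        · exact h
        · exfalso
          have hsub : X ⊆ M.closure (C ∩ X) :=
            subset_closure_of_rk_le inter_subset_right hXE h.symm.le
          exact hcon C hC (hsub.trans (M.closure_subset_closure inter_subset_left))
      · rw [restrict_ground_eq]
        intro x hx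
        obtain ⟨C, hC, hxC⟩ := hcovE (hXE hx)
        rw [Set.mem_sUnion]
        refine ⟨C ∩ X, ?_, hxC, hx⟩
        exact Finset.mem_coe.2 (Finset.mem_image_of_mem _ (Finset.mem_coe.1 hC))
    have hcover2 : M.CoverOf (𝒞.image M.closure) 𝒳 := by
      constructor
      · intro F hF
        obtain ⟨C, hC, rfl⟩ := Finset.mem_image.1 hF
        exact M.closure_subset_ground C
      · intro X hX
        obtain ⟨C, hC, hXC⟩ := hstep X hX
        exact ⟨M.closure C, Finset.mem_image_of_mem _ hC, hXC⟩
    have hwt2 : M.wt d (𝒞.image M.closure) ≤ 𝒞.card * d ^ (M.rank - 1) := by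
      calc M.wt d (𝒞.image M.closure) ≤ ∑ C ∈ 𝒞, d ^ M.rk (M.closure C) :=
            sum_image_le'' 𝒞 M.closure (fun F => d ^ M.rk F)
        _ ≤ ∑ C ∈ 𝒞, d ^ (M.rank - 1) := by
            refine Finset.sum_le_sum fun C hC => ?_
            rw [rk_closure_eq (h𝒞 C hC).1]
            exact Nat.pow_le_pow_right hd (by have := (h𝒞 C hC).2; omega)
        _ = 𝒞.card * d ^ (M.rank - 1) := by rw [Finset.sum_const, smul_eq_mul]
    have hfin : d ^ M.rank ≤ 𝒞.card * d ^ (M.rank - 1) := (key _ hcover2).trans hwt2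
    have hpow : d ^ M.rank = d * d ^ (M.rank - 1) := by
      rw [← pow_succ']
      congr 1
      omega
    have hlt2 : 𝒞.card * d ^ (M.rank - 1) < d * d ^ (M.rank - 1) :=
      Nat.mul_lt_mul_of_lt_of_le hlt (le_refl _) (Nat.pow_pos hd)
    omega


end Matroid
end
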